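/- Let n be a positive integer and a₀ a nonzero complex number. Let p be analytic on the open unit disk 𝔻 with p(0) = a₀, with vanishing derivatives of orders 1, …, n−1 at 0, and with p(z) ≠ 0 for all z ∈ 𝔻. Suppose there exists z₀ ∈ 𝔻 with z₀ ≠ 0 and |p(z₀)| < |a₀| such that |p(z₀)| = min_{|z| ≤ |z₀|} |p(z)|. Then p'(z₀) ≠ 0 and Re( z₀·p''(z₀)/p'(z₀) ) + 1 ≥ Re( z₀·p'(z₀)/p(z₀) ). -/

import Mathlib

open Metric Filter Set Topology

lemma alg_aux {c N ρ : ℝ} (hc : c < 0) (hN : 0 < N) (h3 : ρ ≤ c ^ 2 / N - c) :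
    ρ / c + 1 ≥ c / N := by
  have h4 : c / N - 1 ≤ ρ / c := by
    rw [le_div_iff_of_neg hc]
    calc (c / N - 1) * c = c ^ 2 / N - c := by ring
      _ ≥ ρ := h3
  linarith

/-- final complex algebra step -/
lemma final_alg {P Q R : ℂ} (hP : P ≠ 0) (hQ : Q ≠ 0)
    (him : ((starRingEnd ℂ) P * Q).im = 0)
    (hre : ((starRingEnd ℂ) P * Q).re ≤ 0)
    (h3 : ((starRingEnd ℂ) P * Q).re + ((starRingEnd ℂ) P * R).re ≤ Complex.normSq Q) :
    (R / Q).re + 1 ≥ (Q / P).re := by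
  set c : ℝ := ((starRingEnd ℂ) P * Q).re with hcdef
  set N : ℝ := Complex.normSq P with hNdef
  set ρ : ℝ := ((starRingEnd ℂ) P * R).re with hρdef
  have hN : 0 < N := Complex.normSq_pos.2 hP
  have hPc : (starRingEnd ℂ) P ≠ 0 := by simpa using hP
  have hc0 : c < 0 := by
    rcases lt_or_eq_of_le hre with h | h
    · exact h
    · exfalso
      have h0 : (starRingEnd ℂ) P * Q = 0 := by
        apply Complex.ext
        · show c = (0 : ℂ).re; rw [Complex.zero_re]; exact h
        · simpa using him
      exact (mul_ne_zero hPc hQ) h0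
  have hPQ : (starRingEnd ℂ) P * Q = (c : ℂ) := by
    apply Complex.ext
    · rw [Complex.ofReal_re]
    · rw [Complex.ofReal_im]; exact him
  have hQeq : Q = (c : ℂ) / (starRingEnd ℂ) P := by
    rw [← hPQ]; field_simp
  have hQP : Q / P = ((c / N : ℝ) : ℂ) := by
    have h1 : Q / P = ((starRingEnd ℂ) P * Q) / ((starRingEnd ℂ) P * P) :=
      (mul_div_mul_left Q P hPc).symm
    rw [h1, hPQ, mul_comm ((starRingEnd ℂ) P) P, Complex.mul_conj, Complex.ofReal_div]
  have hQre : (Q / P).re = c / N := by rw [hQP, Complex.ofReal_re]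
  have hRQ : (R / Q).re = ρ / c := by
    rw [hQeq, div_div_eq_mul_div, Complex.div_ofReal_re]
    congr 1
    rw [mul_comm]
  have hnsq : Complex.normSq Q = c ^ 2 / N := by
    rw [hQeq, map_div₀, Complex.normSq_conj, Complex.normSq_ofReal]
    show c * c / N = c ^ 2 / N
    ring
  rw [hQre, hRQ]
  exact alg_aux hc0 hN (by rw [hnsq] at h3; linarith)


lemma mobius_lt {b w : ℂ} (hb : ‖b‖ < 1) (hw : ‖w‖ < 1) :
    ‖(w - b) / (1 - (starRingEnd ℂ) b * w)‖ < 1 := by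
  have hb2 : Complex.normSq b < 1 := by
    rw [← Complex.sq_norm]; nlinarith [norm_nonneg b]
  have hw2 : Complex.normSq w < 1 := by
    rw [← Complex.sq_norm]; nlinarith [norm_nonneg w]
  have key : Complex.normSq (1 - (starRingEnd ℂ) b * w) - Complex.normSq (w - b)
      = (1 - Complex.normSq b) * (1 - Complex.normSq w) := by
    simp [Complex.normSq_apply, Complex.mul_re, Complex.mul_im, Complex.sub_re,
      Complex.sub_im]
    ring
  have hlt : Complex.normSq (w - b) < Complex.normSq (1 - (starRingEnd ℂ) b * w) := by
    nlinarith
  have hden : (1 : ℂ) - (starRingEnd ℂ) b * w ≠ 0 := by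
    intro h0
    rw [h0] at hlt
    simp at hlt
    nlinarith [Complex.normSq_nonneg (w - b)]
  rw [norm_div, div_lt_one (norm_pos_iff.mpr hden)]
  rw [Complex.norm_def, Complex.norm_def]
  exact Real.sqrt_lt_sqrt (Complex.normSq_nonneg _) hlt

lemma schwarz_step (p : ℂ → ℂ) (a₀ : ℂ) (ha₀ : a₀ ≠ 0)
    (hp : DifferentiableOn ℂ p (ball (0 : ℂ) 1)) (hp0 : p 0 = a₀)
    (hne : ∀ z ∈ ball (0 : ℂ) 1, p z ≠ 0)
    (z₀ : ℂ) (hz₀ : z₀ ∈ ball (0 : ℂ) 1) (hz₀ne : z₀ ≠ 0)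
    (hlt : ‖p z₀‖ < ‖a₀‖)
    (hmin : ∀ z ∈ closedBall (0 : ℂ) (‖z₀‖),
      ‖p z₀‖ ≤ ‖p z‖) :
    deriv p z₀ ≠ 0 := by
  intro hq0
  set r := ‖z₀‖ with hrdef
  have hr0 : 0 < r := norm_pos_iff.mpr hz₀ne
  have hr1 : r < 1 := by simpa [hrdef, Complex.dist_eq] using mem_ball.1 hz₀
  have hsub : closedBall (0 : ℂ) r ⊆ ball 0 1 := closedBall_subset_ball hr1
  have hz₀cb : z₀ ∈ closedBall (0 : ℂ) r := by
    simp [mem_closedBall, Complex.dist_eq, hrdef]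
  set F : ℂ → ℂ := fun z => p z₀ / p z with hFdef
  set b : ℂ := p z₀ / a₀ with hbdef
  have hb : ‖b‖ < 1 := by
    rw [hbdef, norm_div]
    exact (div_lt_one (norm_pos_iff.mpr ha₀)).2 hlt
  have hFle : ∀ z ∈ closedBall (0 : ℂ) r, ‖F z‖ ≤ 1 := by
    intro z hz
    simp only [hFdef, norm_div]
    exact (div_le_one (norm_pos_iff.mpr (hne z (hsub hz)))).2 (hmin z hz)
  have hFd : DifferentiableOn ℂ F (ball (0 : ℂ) 1) :=
    (differentiableOn_const _).div hp hne
  have hFdr : DifferentiableOn ℂ F (ball (0 : ℂ) r) :=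
    hFd.mono (ball_subset_ball hr1.le)
  have hF0 : F 0 = b := by simp only [hFdef, hbdef, hp0]
  have hFlt : ∀ z ∈ ball (0 : ℂ) r, ‖F z‖ < 1 := by
    intro z hz
    rcases lt_or_eq_of_le (hFle z (ball_subset_closedBall hz)) with h | h
    · exact h
    · exfalso
      have hmax : IsMaxOn (norm ∘ F) (ball (0 : ℂ) r) z := by
        intro y hy
        simp only [Function.comp_apply]
        rw [h]
        exact hFle y (ball_subset_closedBall hy)
      have heq := Complex.eqOn_of_isPreconnected_of_isMaxOn_norm
        (convex_ball (0 : ℂ) r).isPreconnected isOpen_ball hFdr hz hmax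
      have h01 : F 0 = F z := heq (mem_ball_self hr0)
      rw [hF0] at h01
      have : ‖b‖ = 1 := by rw [h01, h]
      linarith
  set G : ℂ → ℂ := fun z => (F z - b) / (1 - (starRingEnd ℂ) b * F z) with hGdef
  have hden : ∀ z ∈ closedBall (0 : ℂ) r, (1 : ℂ) - (starRingEnd ℂ) b * F z ≠ 0 := by
    intro z hz h0
    have h1 : (1 : ℂ) = (starRingEnd ℂ) b * F z := by linear_combination h0
    have h2 : (1 : ℝ) ≤ ‖b‖ * 1 := by
      calc (1 : ℝ) = ‖(starRingEnd ℂ) b * F z‖ := by rw [← h1]; simp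
        _ = ‖b‖ * ‖F z‖ := by rw [norm_mul, Complex.norm_conj]
        _ ≤ ‖b‖ * 1 :=
            mul_le_mul_of_nonneg_left (hFle z hz) (norm_nonneg b)
    rw [mul_one] at h2
    linarith
  have hGd : DifferentiableOn ℂ G (ball (0 : ℂ) r) := by
    apply DifferentiableOn.div
    · exact hFdr.sub_const b
    · exact (differentiableOn_const _).sub (hFdr.const_mul _)
    · exact fun z hz => hden z (ball_subset_closedBall hz)
  have hG0 : G 0 = 0 := by simp [hGdef, hF0]
  have hmaps : MapsTo G (ball (0 : ℂ) r) (ball (G 0) 1) := by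
    intro z hz
    rw [hG0, mem_ball, Complex.dist_eq, sub_zero]
    exact mobius_lt hb (hFlt z hz)
  have hSch : ∀ s : ℝ, s ∈ Ico (0 : ℝ) 1 → ‖G ((s : ℂ) * z₀)‖ ≤ s := by
    intro s hs
    have hmem : (s : ℂ) * z₀ ∈ ball (0 : ℂ) r := by
      rw [mem_ball, Complex.dist_eq, sub_zero, norm_mul, Complex.norm_real, Real.norm_eq_abs,
        abs_of_nonneg hs.1]
      calc s * r < 1 * r := mul_lt_mul_of_pos_right hs.2 hr0
        _ = r := one_mul r
    have h1 := Complex.dist_le_div_mul_dist_of_mapsTo_ball hGd (hmaps.mono_right ball_subset_closedBall) hmem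
    rw [hG0, Complex.dist_eq, Complex.dist_eq, sub_zero, sub_zero, norm_mul,
      Complex.norm_real, Real.norm_eq_abs, abs_of_nonneg hs.1] at h1
    calc ‖G ((s : ℂ) * z₀)‖ ≤ 1 / r * (s * r) := h1
      _ = s := by field_simp
  -- derivative of G at z₀ is 0
  have hFz₀ : F z₀ = 1 := div_self (hne z₀ hz₀)
  have hF' : HasDerivAt F 0 z₀ := by
    have h1 := (((hp.differentiableAt (isOpen_ball.mem_nhds hz₀)).hasDerivAt).inv
      (hne z₀ hz₀)).const_mul (p z₀)
    rw [hq0] at h1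
    simp only [neg_zero, zero_div, mul_zero] at h1
    have hfun : F = fun z => p z₀ * (p z)⁻¹ := by
      funext z; simp only [hFdef, div_eq_mul_inv]
    rw [hfun]
    exact h1
  have hdenz₀ : (1 : ℂ) - (starRingEnd ℂ) b * F z₀ ≠ 0 := hden z₀ hz₀cb
  have hG' : HasDerivAt G 0 z₀ := by
    have hnum : HasDerivAt (fun z => F z - b) 0 z₀ := hF'.sub_const b
    have hd2 : HasDerivAt (fun z => (1 : ℂ) - (starRingEnd ℂ) b * F z) 0 z₀ := by
      simpa using (hF'.const_mul ((starRingEnd ℂ) b)).const_sub 1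
    have h3 := hnum.div hd2 hdenz₀
    simp only [zero_mul, mul_zero, sub_zero, zero_sub, zero_div, neg_zero] at h3
    rw [hGdef]
    exact h3
  have hbne : (1 : ℂ) - (starRingEnd ℂ) b ≠ 0 := by
    have h := hdenz₀; rw [hFz₀, mul_one] at h; exact h
  have hGz₀abs : ‖G z₀‖ = 1 := by
    simp only [hGdef, hFz₀, mul_one, norm_div]
    have habs : ‖1 - b‖ = ‖1 - (starRingEnd ℂ) b‖ := by
      rw [← Complex.norm_conj (1 - b), map_sub, map_one]
    rw [habs, div_self (norm_ne_zero_iff.mpr hbne)]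
  -- slope contradiction
  have hγ2 : HasDerivAt (fun s : ℝ => (s : ℂ) * z₀) z₀ 1 := by
    simpa using (Complex.ofRealCLM.hasDerivAt (x := (1 : ℝ))).mul_const z₀
  have hH : HasDerivAt (fun s : ℝ => G ((s : ℂ) * z₀)) 0 1 := by
    have hG'' : HasDerivAt G 0 (((1 : ℝ) : ℂ) * z₀) := by
      rw [Complex.ofReal_one, one_mul]; exact hG'
    simpa [Function.comp_def] using hG''.scomp 1 hγ2
  have hHnorm : Tendsto (fun s => ‖slope (fun s : ℝ => G ((s : ℂ) * z₀)) 1 s‖)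
      (𝓝[<] 1) (𝓝 0) := by
    have h1 := hasDerivAt_iff_tendsto_slope.1 hH
    have h2 := h1.mono_left (nhdsWithin_mono 1 (fun x (hx : x ∈ Iio 1) => ne_of_lt hx))
    simpa using h2.norm
  have hev : ∀ᶠ s in 𝓝[<] (1 : ℝ), 1 ≤ ‖slope (fun s : ℝ => G ((s : ℂ) * z₀)) 1 s‖ := by
    filter_upwards [Ioo_mem_nhdsLT_of_mem (show (1 : ℝ) ∈ Ioc (0 : ℝ) 1 by norm_num)]
      with s hs
    have hb1 : ‖G ((s : ℂ) * z₀)‖ ≤ s := hSch s ⟨hs.1.le, hs.2⟩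
    have hHval : ‖G (((1 : ℝ) : ℂ) * z₀)‖ = 1 := by
      rw [Complex.ofReal_one, one_mul]; exact hGz₀abs
    rw [slope_def_module, norm_smul]
    have hlow : (1 : ℝ) - s ≤ ‖G ((s : ℂ) * z₀) - G (((1 : ℝ) : ℂ) * z₀)‖ := by
      have := norm_sub_norm_le (G (((1 : ℝ) : ℂ) * z₀)) (G ((s : ℂ) * z₀))
      rw [← norm_neg]
      simp only [neg_sub]
      calc (1 : ℝ) - s ≤ ‖G (((1 : ℝ) : ℂ) * z₀)‖ - ‖G ((s : ℂ) * z₀)‖ := by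
            rw [hHval]; linarith
        _ ≤ ‖G (((1 : ℝ) : ℂ) * z₀) - G ((s : ℂ) * z₀)‖ := this
    have hs1 : (0 : ℝ) < 1 - s := by linarith [hs.2]
    have : ‖(s - 1 : ℝ)⁻¹‖ = (1 - s)⁻¹ := by
      rw [norm_inv, Real.norm_eq_abs, abs_of_neg (by linarith : s - 1 < 0)]
      ring_nf
    rw [this]
    calc (1 : ℝ) = (1 - s)⁻¹ * (1 - s) := by field_simp
      _ ≤ (1 - s)⁻¹ * ‖G ((s : ℂ) * z₀) - G (((1 : ℝ) : ℂ) * z₀)‖ :=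
          mul_le_mul_of_nonneg_left hlow (by positivity)
  have : (1 : ℝ) ≤ 0 := ge_of_tendsto hHnorm hev
  linarith


lemma hasDerivAt_normSq_comp {f : ℝ → ℂ} {f' : ℂ} {t : ℝ} (hf : HasDerivAt f f' t) :
    HasDerivAt (fun s => Complex.normSq (f s)) (2 * ((starRingEnd ℂ) (f t) * f').re) t := by
  have h := (Complex.reCLM.hasFDerivAt).comp_hasDerivAt t (hf.star.mul hf)
  have heq : (fun s => Complex.normSq (f s))
      = fun s => Complex.reCLM (star (f s) * f s) := by
    funext s
    simp [Complex.normSq_apply, Complex.mul_re]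
  rw [heq]
  refine h.congr_deriv ?_
  simp [Complex.mul_re]
  ring

section main

variable (p : ℂ → ℂ) (a₀ : ℂ) (z₀ : ℂ)

theorem main_part2
    (ha₀ : a₀ ≠ 0)
    (hp : DifferentiableOn ℂ p (ball (0 : ℂ) 1))
    (hp0 : p 0 = a₀)
    (hne : ∀ z ∈ ball (0 : ℂ) 1, p z ≠ 0)
    (hz₀ : z₀ ∈ ball (0 : ℂ) 1) (hz₀ne : z₀ ≠ 0)
    (hlt : ‖p z₀‖ < ‖a₀‖)
    (hmin : ∀ z ∈ closedBall (0 : ℂ) (‖z₀‖),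
      ‖p z₀‖ ≤ ‖p z‖)
    (hq : deriv p z₀ ≠ 0) :
    (z₀ * deriv (deriv p) z₀ / deriv p z₀).re + 1 ≥
      (z₀ * deriv p z₀ / p z₀).re := by
  set q := deriv p with hqdef
  have han : AnalyticOnNhd ℂ p (ball (0 : ℂ) 1) := hp.analyticOnNhd isOpen_ball
  have hd1 : ∀ z ∈ ball (0 : ℂ) 1, HasDerivAt p (q z) z := fun z hz =>
    ((han z hz).differentiableAt).hasDerivAt
  have hd2 : ∀ z ∈ ball (0 : ℂ) 1, HasDerivAt q (deriv q z) z := fun z hz =>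
    ((han.deriv z hz).differentiableAt).hasDerivAt
  set r := ‖z₀‖ with hrdef
  have hr0 : 0 < r := norm_pos_iff.mpr hz₀ne
  have hr1 : r < 1 := by simpa [hrdef, Complex.dist_eq] using mem_ball.1 hz₀
  have hsub : closedBall (0 : ℂ) r ⊆ ball 0 1 := closedBall_subset_ball hr1
  set γ : ℝ → ℂ := fun t => z₀ * Complex.exp (t * Complex.I) with hγdef
  have hγcb : ∀ t, γ t ∈ closedBall (0 : ℂ) r := by
    intro t
    simp [hγdef, mem_closedBall, Complex.dist_eq, norm_mul, Complex.norm_exp, hrdef]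
  have hγmem : ∀ t, γ t ∈ ball (0 : ℂ) 1 := fun t => hsub (hγcb t)
  have hγ0 : γ 0 = z₀ := by simp [hγdef]
  have hγ' : ∀ t, HasDerivAt γ (Complex.I * γ t) t := by
    intro t
    have h1 : HasDerivAt (fun t : ℝ => (t : ℂ) * Complex.I) Complex.I t := by
      simpa using (Complex.ofRealCLM.hasDerivAt (x := t)).mul_const Complex.I
    have h2 := (h1.cexp).const_mul z₀
    rw [hγdef]
    refine h2.congr_deriv ?_
    ring
  set w : ℝ → ℂ := fun t => p (γ t) with hwdef
  set w2 : ℝ → ℂ := fun t => Complex.I * γ t * q (γ t) with hw2def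
  have hw : ∀ t, HasDerivAt w (w2 t) t := by
    intro t
    have h := (hd1 (γ t) (hγmem t)).scomp t (hγ' t)
    simpa [smul_eq_mul, Function.comp_def, hwdef, hw2def, mul_assoc] using h
  set u : ℝ → ℝ := fun t => Complex.normSq (w t) with hudef
  have hu : ∀ t, HasDerivAt u (2 * ((starRingEnd ℂ) (w t) * w2 t).re) t :=
    fun t => hasDerivAt_normSq_comp (hw t)
  have humin : ∀ t, u 0 ≤ u t := by
    intro t
    simp only [hudef, hwdef, hγ0]
    rw [← Complex.sq_norm, ← Complex.sq_norm]
    exact pow_le_pow_left₀ (norm_nonneg _) (hmin (γ t) (hγcb t)) 2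
  have hu0 : 2 * ((starRingEnd ℂ) (w 0) * w2 0).re = 0 := by
    have hloc : IsLocalMin u 0 := Filter.Eventually.of_forall humin
    have h := hloc.deriv_eq_zero
    rw [(hu 0).deriv] at h
    exact h
  -- tangential first-derivative condition: imaginary part vanishes
  have key2 : ((starRingEnd ℂ) (p z₀) * (z₀ * q z₀)).im = 0 := by
    have h := hu0
    simp only [hw2def, hwdef, hγ0] at h
    have heq : (starRingEnd ℂ) (p z₀) * (Complex.I * z₀ * q z₀)
        = Complex.I * ((starRingEnd ℂ) (p z₀) * (z₀ * q z₀)) := by ring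
    rw [heq] at h
    simp only [Complex.mul_re, Complex.I_re, Complex.I_im] at h
    linarith
  -- second derivative of w2
  have hw2' : HasDerivAt w2 (-(z₀ * q z₀) - z₀ ^ 2 * deriv q z₀) 0 := by
    have hf : HasDerivAt (fun t => Complex.I * γ t) (Complex.I * (Complex.I * γ 0)) 0 :=
      (hγ' 0).const_mul Complex.I
    have hg : HasDerivAt (fun t => q (γ t)) (Complex.I * γ 0 * deriv q (γ 0)) 0 := by
      have h := (hd2 (γ 0) (hγmem 0)).scomp 0 (hγ' 0)
      simpa [smul_eq_mul, Function.comp_def, mul_assoc] using h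
    have h := hf.mul hg
    rw [hγ0] at h
    rw [hw2def]
    refine h.congr_deriv ?_
    linear_combination (z₀ * q z₀ + z₀ ^ 2 * deriv q z₀) * Complex.I_sq
  have hu1 : HasDerivAt (fun t => 2 * ((starRingEnd ℂ) (w t) * w2 t).re)
      (2 * ((starRingEnd ℂ) (w2 0) * w2 0
        + (starRingEnd ℂ) (w 0) * (-(z₀ * q z₀) - z₀ ^ 2 * deriv q z₀)).re) 0 := by
    have hin := (hw 0).star.mul hw2'
    have hre := (Complex.reCLM.hasFDerivAt).comp_hasDerivAt 0 hin
    exact hre.const_mul (2 : ℝ)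
  -- second-derivative nonnegativity at an interior minimum
  have key4 : 0 ≤ 2 * ((starRingEnd ℂ) (w2 0) * w2 0
      + (starRingEnd ℂ) (w 0) * (-(z₀ * q z₀) - z₀ ^ 2 * deriv q z₀)).re := by
    by_contra hneg
    push_neg at hneg
    have hslope := hasDerivAt_iff_tendsto_slope.1 hu1
    have hev : ∀ᶠ s in 𝓝[>] (0 : ℝ), 2 * ((starRingEnd ℂ) (w s) * w2 s).re < 0 := by
      have h2 := hslope.mono_left
        (nhdsWithin_mono 0 (fun x (hx : x ∈ Ioi 0) => ne_of_gt hx))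
      have h3 := h2.eventually_lt_const hneg
      filter_upwards [h3, self_mem_nhdsWithin] with s hs hs0
      rw [slope_def_field, hu0, sub_zero, sub_zero] at hs
      rcases div_neg_iff.1 hs with ⟨h, h'⟩ | ⟨h, h'⟩
      · exact absurd h' (not_lt.2 (le_of_lt hs0))
      · exact h
    obtain ⟨δ, hδmem, hδ⟩ := mem_nhdsGT_iff_exists_Ioo_subset.1 hev
    have hanti : StrictAntiOn u (Icc 0 δ) := by
      apply strictAntiOn_of_deriv_neg (convex_Icc 0 δ)
      · exact fun t _ => ((hu t).continuousAt).continuousWithinAt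
      · intro t ht
        rw [interior_Icc] at ht
        rw [(hu t).deriv]
        exact hδ ⟨ht.1, ht.2⟩
    have hlt' := hanti (left_mem_Icc.2 (le_of_lt hδmem)) (right_mem_Icc.2 (le_of_lt hδmem))
      hδmem
    exact absurd hlt' (not_lt.2 (humin δ))
  -- radial derivative condition
  have hγ2 : ∀ s : ℝ, HasDerivAt (fun s : ℝ => (s : ℂ) * z₀) z₀ s := by
    intro s
    simpa using (Complex.ofRealCLM.hasDerivAt (x := s)).mul_const z₀
  have hv : HasDerivAt (fun s : ℝ => Complex.normSq (p ((s : ℂ) * z₀)))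
      (2 * ((starRingEnd ℂ) (p z₀) * (z₀ * q z₀)).re) 1 := by
    have hmem1 : (((1 : ℝ) : ℂ) * z₀) ∈ ball (0 : ℂ) 1 := by
      rw [Complex.ofReal_one, one_mul]; exact hz₀
    have hcomp := (hd1 _ hmem1).scomp 1 (hγ2 1)
    have h := hasDerivAt_normSq_comp (f' := z₀ * q (((1 : ℝ) : ℂ) * z₀))
      (by simpa [smul_eq_mul, Function.comp] using hcomp)
    simpa [Complex.ofReal_one, one_mul] using h
  have key3 : 2 * ((starRingEnd ℂ) (p z₀) * (z₀ * q z₀)).re ≤ 0 := by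
    have hslope := hasDerivAt_iff_tendsto_slope.1 hv
    have h2 := hslope.mono_left
      (nhdsWithin_mono 1 (fun x (hx : x ∈ Iio 1) => ne_of_lt hx))
    apply le_of_tendsto h2
    filter_upwards [Ioo_mem_nhdsLT_of_mem (show (1 : ℝ) ∈ Ioc (0 : ℝ) 1 by norm_num)]
      with s hs
    rw [slope_def_field]
    apply div_nonpos_of_nonneg_of_nonpos
    · rw [sub_nonneg, Complex.ofReal_one, one_mul]
      have hsm : ((s : ℂ) * z₀) ∈ closedBall (0 : ℂ) r := by
        rw [mem_closedBall, Complex.dist_eq, sub_zero, norm_mul, Complex.norm_real, Real.norm_eq_abs,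
          abs_of_nonneg hs.1.le]
        nlinarith [hs.2, hr0]
      rw [← Complex.sq_norm, ← Complex.sq_norm]
      exact pow_le_pow_left₀ (norm_nonneg _) (hmin _ hsm) 2
    · linarith [hs.2]
  -- assemble
  have hP : p z₀ ≠ 0 := hne z₀ hz₀
  have hQne : z₀ * q z₀ ≠ 0 := mul_ne_zero hz₀ne hq
  have key3' : ((starRingEnd ℂ) (p z₀) * (z₀ * q z₀)).re ≤ 0 := by linarith
  have key4' : ((starRingEnd ℂ) (p z₀) * (z₀ * q z₀)).re
      + ((starRingEnd ℂ) (p z₀) * (z₀ ^ 2 * deriv q z₀)).re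
      ≤ Complex.normSq (z₀ * q z₀) := by
    have h := key4
    simp only [hw2def, hwdef, hγ0] at h
    have h2 : (starRingEnd ℂ) (p z₀) * (-(z₀ * q z₀) - z₀ ^ 2 * deriv q z₀)
        = -((starRingEnd ℂ) (p z₀) * (z₀ * q z₀))
          - (starRingEnd ℂ) (p z₀) * (z₀ ^ 2 * deriv q z₀) := by ring
    rw [h2, Complex.add_re, Complex.sub_re, Complex.neg_re] at h
    have h1 : ((starRingEnd ℂ) (Complex.I * z₀ * q z₀) * (Complex.I * z₀ * q z₀)).re
        = Complex.normSq (z₀ * q z₀) := by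
      rw [mul_comm, Complex.mul_conj, Complex.ofReal_re]
      have h3 : Complex.I * z₀ * q z₀ = Complex.I * (z₀ * q z₀) := by ring
      rw [h3, map_mul, Complex.normSq_I, one_mul]
    rw [h1] at h
    linarith
  have hfin := final_alg hP hQne key2 key3' key4'
  have hconv : z₀ ^ 2 * deriv q z₀ / (z₀ * q z₀) = z₀ * deriv q z₀ / q z₀ := by
    field_simp
  rw [hconv] at hfin
  exact hfin

end main

/-- Under the Shiraishi–Owa hypotheses, `p'(z₀) ≠ 0` and
`Re(z₀ p''(z₀)/p'(z₀)) + 1 ≥ Re(z₀ p'(z₀)/p(z₀))`. -/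
theorem shiraishi_owa_second_deriv_bound
    (n : ℕ) (hn : 0 < n) (a₀ : ℂ) (ha₀ : a₀ ≠ 0)
    (p : ℂ → ℂ)
    (hp : DifferentiableOn ℂ p (ball (0 : ℂ) 1))
    (hp0 : p 0 = a₀)
    (hder : ∀ k : ℕ, 1 ≤ k → k ≤ n - 1 → iteratedDeriv k p 0 = 0)
    (hne : ∀ z ∈ ball (0 : ℂ) 1, p z ≠ 0)
    (z₀ : ℂ) (hz₀ : z₀ ∈ ball (0 : ℂ) 1) (hz₀ne : z₀ ≠ 0)
    (hlt : ‖p z₀‖ < ‖a₀‖)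
    (hmin : ∀ z ∈ closedBall (0 : ℂ) (‖z₀‖),
      ‖p z₀‖ ≤ ‖p z‖) :
    deriv p z₀ ≠ 0 ∧
    (z₀ * deriv (deriv p) z₀ / deriv p z₀).re + 1 ≥
      (z₀ * deriv p z₀ / p z₀).re := by
  have h1 := schwarz_step p a₀ ha₀ hp hp0 hne z₀ hz₀ hz₀ne hlt hmin
  exact ⟨h1, main_part2 p a₀ z₀ ha₀ hp hp0 hne hz₀ hz₀ne hlt hmin h1⟩
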